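/- arXiv:1508.06141 — 2 statements merged into one kernel-verified Lean document; each statement's English description precedes it below -/
import Mathlib

section
/- Let (G,θ) be a valued digraph (simple acyclic digraph with valuation 0 ≤ θ(x) ≤ d⁺(x)). If A and B are initial sections with A ⊆ B, |A| = k, |B| = q, then there exists a single peeling sequence [x_1, x_2, ...] such that A = {x_1,...,x_k} and B = {x_1,...,x_q}. Consequently, the poset of initial sections ordered by inclusion is graded with rank function A ↦ |A|. -/
open scoped Classical

variable {V : Type*}

/-- A digraph is acyclic when its transitive closure is irreflexive. -/
def Acyclic (E : V → V → Prop) : Prop := ∀ x, ¬ Relation.TransGen E x x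

/-- `θ` is an out-degree compatible valuation: `θ x ≤ d⁺(x)` for every vertex. -/
def IsOCV (E : V → V → Prop) (θ : V → ℕ) : Prop :=
  ∀ x, ∃ s : Finset V, (∀ y ∈ s, E x y) ∧ θ x ≤ s.card

/-- The current valuation after the vertices of `R` have been peeled. -/
noncomputable def curVal (E : V → V → Prop) (θ : V → ℕ) (R : Finset V) (x : V) : ℕ :=
  θ x - (R.filter fun y => E x y).card

/-- `x` is erasable in the valued digraph obtained after peeling the vertices of `R`. -/
def ErasableAt (E : V → V → Prop) (θ : V → ℕ) (R : Finset V) (x : V) : Prop :=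
  x ∉ R ∧ curVal E θ R x = 0 ∧ ∀ z, z ∉ R → E z x → curVal E θ R z ≠ 0

/-- `PeelFrom E θ R L`: starting from the state where `R` has been peeled, the
list `L` is a valid sequence of successive peelings. -/
def PeelFrom (E : V → V → Prop) (θ : V → ℕ) : Finset V → List V → Prop
  | _, [] => True
  | R, x :: L => ErasableAt E θ R x ∧ PeelFrom E θ (insert x R) L

/-- `A` is an initial section of some peeling sequence of the valued digraph `(G, θ)`. -/
def IsInitialSection (E : V → V → Prop) (θ : V → ℕ) (A : Finset V) : Prop :=
  ∃ L : List V, PeelFrom E θ ∅ L ∧ L.toFinset = A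

section Aux

variable (E : V → V → Prop) (θ : V → ℕ)

lemma curVal_zero_mono {S A : Finset V} (h : S ⊆ A) {x : V}
    (hx : curVal E θ S x = 0) : curVal E θ A x = 0 := by
  have := Finset.card_le_card (Finset.filter_subset_filter (fun y => E x y) h)
  unfold curVal at *
  omega

lemma peelFrom_notMem : ∀ (L : List V) (R : Finset V), PeelFrom E θ R L →
    ∀ x ∈ L, x ∉ R := by
  intro L
  induction L with
  | nil => intro R _ x hx; simp at hx
  | cons c L ih =>
      intro R hL x hx
      rcases List.mem_cons.1 hx with rfl | hx
      · exact hL.1.1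
      · intro hxR
        exact ih (insert c R) hL.2 x hx (Finset.mem_insert_of_mem hxR)

lemma peelFrom_nodup : ∀ (L : List V) (R : Finset V), PeelFrom E θ R L → L.Nodup := by
  intro L
  induction L with
  | nil => intro R _; simp
  | cons c L ih =>
      intro R hL
      refine List.nodup_cons.2 ⟨fun hc => ?_, ih (insert c R) hL.2⟩
      exact peelFrom_notMem E θ L (insert c R) hL.2 c hc (Finset.mem_insert_self c R)

lemma peelFrom_append : ∀ (P : List V) (Q : List V) (R : Finset V),
    PeelFrom E θ R (P ++ Q) ↔ PeelFrom E θ R P ∧ PeelFrom E θ (R ∪ P.toFinset) Q := by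
  intro P
  induction P with
  | nil => intro Q R; simp [PeelFrom]
  | cons x P ih =>
      intro Q R
      show (ErasableAt E θ R x ∧ PeelFrom E θ (insert x R) (P ++ Q)) ↔
        (ErasableAt E θ R x ∧ PeelFrom E θ (insert x R) P) ∧ _
      rw [ih]
      have h : insert x R ∪ P.toFinset = R ∪ (x :: P).toFinset := by
        simp [Finset.ext_iff]
      rw [h, and_assoc]

lemma filter_card_le (z : V) : ∀ (L : List V) (R : Finset V), PeelFrom E θ R L →
    z ∉ R → z ∉ L → (R.filter fun c => E z c).card ≤ θ z →
    ((R ∪ L.toFinset).filter fun c => E z c).card ≤ θ z := by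
  intro L
  induction L with
  | nil => intro R _ _ _ h; simpa using h
  | cons c L ih =>
      intro R hL hzR hzL hcard
      have hzc : z ≠ c := fun h => hzL (h ▸ (List.mem_cons_self : c ∈ c :: L))
      have hzL' : z ∉ L := fun h => hzL (List.mem_cons_of_mem c h)
      have hRc : R ∪ (c :: L).toFinset = insert c R ∪ L.toFinset := by
        simp [Finset.ext_iff]
      rw [hRc]
      refine ih (insert c R) hL.2 (by simp [hzc, hzR]) hzL' ?_
      by_cases hE : E z c
      · have hne := hL.1.2.2 z hzR hE
        have hlt : (R.filter fun y => E z y).card < θ z := by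
          unfold curVal at hne; omega
        have : (insert c R).filter (fun y => E z y) = insert c (R.filter fun y => E z y) := by
          rw [Finset.filter_insert, if_pos hE]
        rw [this, Finset.card_insert_of_notMem (fun h => hL.1.1 (Finset.mem_of_mem_filter c h))]
        omega
      · have : (insert c R).filter (fun y => E z y) = R.filter fun y => E z y := by
          rw [Finset.filter_insert, if_neg hE]
        rw [this]; exact hcard

lemma exists_first_notin : ∀ (L : List V) (R A : Finset V), PeelFrom E θ R L →
    ¬ (∀ x ∈ L, x ∈ A) → ∃ b, b ∈ L ∧ b ∉ A ∧ curVal E θ (R ∪ A) b = 0 := by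
  intro L
  induction L with
  | nil => intro R A _ h; exact absurd (by simp) h
  | cons c L ih =>
      intro R A hL hnot
      by_cases hc : c ∈ A
      · have hnot' : ¬ (∀ x ∈ L, x ∈ A) := by
          intro h
          exact hnot (by
            intro x hx
            rcases List.mem_cons.1 hx with rfl | hx
            · exact hc
            · exact h x hx)
        obtain ⟨b, hbL, hbA, hb0⟩ := ih (insert c R) A hL.2 hnot'
        have : insert c R ∪ A = R ∪ A := by
          ext a
          simp only [Finset.mem_union, Finset.mem_insert]
          constructor
          · rintro (⟨rfl | h⟩ | h)
            exacts [Or.inr hc, Or.inl h, Or.inr h]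
          · tauto
        rw [this] at hb0
        exact ⟨b, List.mem_cons_of_mem c hbL, hbA, hb0⟩
      · exact ⟨c, List.mem_cons_self, hc,
          curVal_zero_mono E θ (Finset.subset_union_left) hL.1.2.1⟩

end Aux

lemma exists_source {E : V → V → Prop} (hac : Acyclic E) (D : Finset V) (hD : D.Nonempty) :
    ∃ v ∈ D, ∀ w ∈ D, ¬ E w v := by
  induction D using Finset.strongInduction with
  | _ D ih =>
    obtain ⟨v₀, hv₀⟩ := hD
    by_cases h : ∀ w ∈ D, ¬ E w v₀
    · exact ⟨v₀, hv₀, h⟩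
    · push_neg at h
      obtain ⟨w, hwD, hw⟩ := h
      set D' := D.filter (fun u => Relation.TransGen E u v₀) with hD'
      have hwD' : w ∈ D' := Finset.mem_filter.2 ⟨hwD, Relation.TransGen.single hw⟩
      have hv₀D' : v₀ ∉ D' := fun h => hac v₀ (Finset.mem_filter.1 h).2
      have hss : D' ⊂ D := ⟨Finset.filter_subset _ _, fun h => hv₀D' (h hv₀)⟩
      obtain ⟨v, hvD', hv⟩ := ih D' hss ⟨w, hwD'⟩
      refine ⟨v, Finset.mem_filter.1 hvD' |>.1, fun u huD hu => ?_⟩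
      exact hv u (Finset.mem_filter.2 ⟨huD,
        Relation.TransGen.head hu (Finset.mem_filter.1 hvD').2⟩) hu

lemma exists_erasable {E : V → V → Prop} {θ : V → ℕ} (hac : Acyclic E)
    {A B : Finset V} (hAB : A ⊆ B) (hne : A ≠ B)
    {L : List V} (hL : PeelFrom E θ ∅ L) (hLB : L.toFinset = B) :
    ∃ v, v ∈ B ∧ v ∉ A ∧ ErasableAt E θ A v := by
  -- Claim Z : any vertex of value 0 at A with an out-neighbour in B \ A lies in B
  have claimZ : ∀ z, z ∉ A → curVal E θ A z = 0 →
      ∀ c, c ∈ B → c ∉ A → E z c → z ∈ B := by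
    intro z hzA hz0 c hcB hcA hE
    by_contra hzB
    have hzL : z ∉ L := fun h => hzB (hLB ▸ List.mem_toFinset.2 h)
    have hkey := filter_card_le E θ z L ∅ hL (by simp) hzL (by simp)
    rw [Finset.empty_union, hLB] at hkey
    -- from curVal A z = 0 : θ z ≤ |A ∩ out z|
    have hθ : θ z ≤ (A.filter fun y => E z y).card := by
      unfold curVal at hz0; omega
    have hsub : insert c (A.filter fun y => E z y) ⊆ B.filter fun y => E z y := by
      intro a ha
      rcases Finset.mem_insert.1 ha with rfl | ha
      · exact Finset.mem_filter.2 ⟨hcB, hE⟩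
      · exact Finset.mem_filter.2 ⟨hAB (Finset.mem_of_mem_filter a ha),
          (Finset.mem_filter.1 ha).2⟩
    have hcard := Finset.card_le_card hsub
    rw [Finset.card_insert_of_notMem (fun h => hcA (Finset.mem_of_mem_filter c h))] at hcard
    omega
  -- D : vertices of B \ A with current value 0 at A
  set D := (B \ A).filter (fun v => curVal E θ A v = 0) with hD
  have hDne : D.Nonempty := by
    have hnotall : ¬ (∀ x ∈ L, x ∈ A) := by
      intro h
      apply hne
      apply Finset.Subset.antisymm hAB
      intro b hb
      exact h b (List.mem_toFinset.1 (hLB ▸ hb))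
    obtain ⟨b, hbL, hbA, hb0⟩ := exists_first_notin E θ L ∅ A hL hnotall
    rw [Finset.empty_union] at hb0
    exact ⟨b, Finset.mem_filter.2 ⟨Finset.mem_sdiff.2 ⟨hLB ▸ List.mem_toFinset.2 hbL, hbA⟩, hb0⟩⟩
  obtain ⟨v, hvD, hv⟩ := exists_source hac D hDne
  have hvBA := Finset.mem_sdiff.1 (Finset.mem_filter.1 hvD).1
  have hv0 := (Finset.mem_filter.1 hvD).2
  refine ⟨v, hvBA.1, hvBA.2, hvBA.2, hv0, fun z hzA hE => ?_⟩
  intro hz0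
  have hzB : z ∈ B := claimZ z hzA hz0 v hvBA.1 hvBA.2 hE
  exact hv z (Finset.mem_filter.2 ⟨Finset.mem_sdiff.2 ⟨hzB, hzA⟩, hz0⟩) hE

lemma peel_diff {E : V → V → Prop} {θ : V → ℕ} (hac : Acyclic E) :
    ∀ (n : ℕ) (A B : Finset V), (B \ A).card = n → A ⊆ B →
    IsInitialSection E θ A → IsInitialSection E θ B →
    ∃ L : List V, PeelFrom E θ A L ∧ L.toFinset = B \ A := by
  intro n
  induction n with
  | zero =>
      intro A B hcard hAB _ _
      refine ⟨[], trivial, ?_⟩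
      simp [Finset.card_eq_zero.1 hcard]
  | succ n ih =>
      intro A B hcard hAB hA hB
      obtain ⟨LB, hLB, hLBB⟩ := hB
      have hne : A ≠ B := by
        intro h; rw [h] at hcard; simp at hcard
      obtain ⟨v, hvB, hvA, hvE⟩ := exists_erasable hac hAB hne hLB hLBB
      obtain ⟨LA, hLA, hLAA⟩ := hA
      have hA' : IsInitialSection E θ (insert v A) := by
        refine ⟨LA ++ [v], ?_, by rw [List.toFinset_append, hLAA]; simp [Finset.ext_iff]⟩
        rw [peelFrom_append]
        refine ⟨hLA, ?_⟩
        rw [Finset.empty_union, hLAA]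
        exact ⟨hvE, trivial⟩
      have hsub : insert v A ⊆ B := Finset.insert_subset hvB hAB
      have hcard' : (B \ insert v A).card = n := by
        have h1 : B \ insert v A = (B \ A).erase v := by
          ext a; simp [Finset.mem_sdiff, Finset.mem_erase]; tauto
        rw [h1, Finset.card_erase_of_mem (Finset.mem_sdiff.2 ⟨hvB, hvA⟩), hcard]
        omega
      obtain ⟨L', hL', hL'set⟩ := ih (insert v A) B hcard' hsub hA' ⟨LB, hLB, hLBB⟩
      refine ⟨v :: L', ⟨hvE, hL'⟩, ?_⟩
      rw [List.toFinset_cons, hL'set]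
      ext a
      constructor
      · intro h
        rcases Finset.mem_insert.1 h with rfl | h
        · exact Finset.mem_sdiff.2 ⟨hvB, hvA⟩
        · rcases Finset.mem_sdiff.1 h with ⟨h1, h2⟩
          exact Finset.mem_sdiff.2 ⟨h1, fun hh => h2 (Finset.mem_insert_of_mem hh)⟩
      · intro h
        rcases Finset.mem_sdiff.1 h with ⟨h1, h2⟩
        by_cases hav : a = v
        · exact hav ▸ Finset.mem_insert_self _ _
        · exact Finset.mem_insert_of_mem (Finset.mem_sdiff.2
            ⟨h1, fun hh => (Finset.mem_insert.1 hh).elim hav h2⟩)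

/-- if `A ⊆ B` are initial sections, some single peeling sequence
peels first `A` and then the rest of `B`; consequently the poset of initial
sections ordered by inclusion is graded with rank function `A ↦ |A|`. -/
theorem initialSections_graded (E : V → V → Prop) (θ : V → ℕ)
    (hac : Acyclic E) (hocv : IsOCV E θ) :
    (∀ A B : Finset V, IsInitialSection E θ A → IsInitialSection E θ B → A ⊆ B →
      ∃ L : List V, PeelFrom E θ ∅ L ∧ L.length = B.card ∧
        (L.take A.card).toFinset = A ∧ L.toFinset = B) ∧
    (∀ A B : Finset V, IsInitialSection E θ A → IsInitialSection E θ B → A ⊂ B →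
      ∃ C : Finset V, IsInitialSection E θ C ∧ A ⊆ C ∧ C ⊆ B ∧
        C.card = A.card + 1) := by
  have part1 : ∀ A B : Finset V, IsInitialSection E θ A → IsInitialSection E θ B → A ⊆ B →
      ∃ L : List V, PeelFrom E θ ∅ L ∧ L.length = B.card ∧
        (L.take A.card).toFinset = A ∧ L.toFinset = B := by
    intro A B hA hB hAB
    obtain ⟨LA, hLA, hLAA⟩ := hA
    obtain ⟨L', hL', hL'set⟩ := peel_diff hac (B \ A).card A B rfl hAB ⟨LA, hLA, hLAA⟩ hB
    have hpeel : PeelFrom E θ ∅ (LA ++ L') := by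
      rw [peelFrom_append]
      exact ⟨hLA, by rw [Finset.empty_union, hLAA]; exact hL'⟩
    have hndA : LA.Nodup := peelFrom_nodup E θ LA ∅ hLA
    have hndL' : L'.Nodup := peelFrom_nodup E θ L' A hL'
    have hlenA : LA.length = A.card := by
      rw [← hLAA, List.toFinset_card_of_nodup hndA]
    have hlenL' : L'.length = (B \ A).card := by
      rw [← hL'set, List.toFinset_card_of_nodup hndL']
    have hcards : A.card + (B \ A).card = B.card := by
      have := Finset.card_sdiff_add_card_eq_card hAB
      omega
    refine ⟨LA ++ L', hpeel, ?_, ?_, ?_⟩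
    · rw [List.length_append, hlenA, hlenL', hcards]
    · rw [← hlenA, List.take_left, hLAA]
    · rw [List.toFinset_append, hLAA, hL'set, Finset.union_sdiff_of_subset hAB]
  refine ⟨part1, ?_⟩
  intro A B hA hB hAB
  obtain ⟨L, hpeel, hlen, htake, htfB⟩ := part1 A B hA hB hAB.subset
  have hnd : L.Nodup := peelFrom_nodup E θ L ∅ hpeel
  have hcardlt : A.card < B.card := Finset.card_lt_card hAB
  refine ⟨(L.take (A.card + 1)).toFinset, ?_, ?_, ?_, ?_⟩
  · refine ⟨L.take (A.card + 1), ?_, rfl⟩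
    have h := (peelFrom_append E θ (L.take (A.card + 1)) (L.drop (A.card + 1)) ∅).1
      (by rw [List.take_append_drop]; exact hpeel)
    exact h.1
  · intro a ha
    rw [← htake] at ha
    have ha' := List.mem_toFinset.1 ha
    have hsub : L.take A.card ⊆ L.take (A.card + 1) := by
      have : (L.take (A.card + 1)).take A.card = L.take A.card := by
        rw [List.take_take]
        congr 1
        omega
      rw [← this]
      exact List.take_subset _ _
    exact List.mem_toFinset.2 (hsub ha')
  · intro a ha
    rw [← htfB]
    exact List.mem_toFinset.2 (List.take_subset _ _ (List.mem_toFinset.1 ha))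
  · have hndt : (L.take (A.card + 1)).Nodup :=
      hnd.sublist ((L.take_prefix (A.card + 1)).sublist)
    rw [List.toFinset_card_of_nodup hndt, List.length_take]
    omega
end

section
/- For a valued digraph (G,θ), the poset (IS(G,θ), ⊆) of initial sections ordered by inclusion is a complete meet semi-lattice: every subset S of IS(G,θ) has an infimum. Moreover, if G is finite, then (IS(G,θ), ⊆) is a complete lattice, with the full vertex set V as the maximum element. -/
open scoped Classical

variable {V : Type*}

/-- In an acyclic digraph, every nonempty finite set has a "sink": a vertex with
no out-neighbour inside the set. -/
lemma exists_sink {E : V → V → Prop} (hac : Acyclic E) :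
    ∀ s : Finset V, s.Nonempty → ∃ x ∈ s, ∀ y ∈ s, ¬ E x y := by
  intro s
  induction s using Finset.strongInduction with
  | _ s ih =>
    rintro ⟨a, ha⟩
    by_cases hsink : ∀ y ∈ s, ¬ E a y
    · exact ⟨a, ha, hsink⟩
    push_neg at hsink
    obtain ⟨b, hb, hab⟩ := hsink
    have hts : s.filter (fun y => Relation.TransGen E a y) ⊂ s := by
      refine (Finset.ssubset_iff_of_subset (Finset.filter_subset _ _)).mpr ⟨a, ha, ?_⟩
      simp only [Finset.mem_filter, not_and]
      exact fun _ h => hac a h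
    obtain ⟨x, hx, hsink⟩ := ih _ hts
      ⟨b, Finset.mem_filter.mpr ⟨hb, Relation.TransGen.single hab⟩⟩
    refine ⟨x, Finset.mem_of_mem_filter _ hx, ?_⟩
    intro y hy hxy
    exact hsink y
      (Finset.mem_filter.mpr ⟨hy, ((Finset.mem_filter.mp hx).2).tail hxy⟩) hxy

/-- In an acyclic digraph, every nonempty finite set has a "source": a vertex with
no in-neighbour inside the set. -/
lemma exists_source_s7 {E : V → V → Prop} (hac : Acyclic E) (s : Finset V)
    (hs : s.Nonempty) : ∃ x ∈ s, ∀ y ∈ s, ¬ E y x := by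
  have hac' : Acyclic (Function.swap E) := fun x h => hac x (Relation.transGen_swap.mp h)
  obtain ⟨x, hx, h⟩ := exists_sink hac' s hs
  exact ⟨x, hx, fun y hy => h y hy⟩

/-- Soundness of peeling: a peeling sequence from a state `R` in which no unpeeled
vertex has been "over-peeled" yields an initial-section-like set. -/
lemma peel_sound (E : V → V → Prop) (θ : V → ℕ) :
    ∀ (L : List V) (R : Finset V), PeelFrom E θ R L →
      (∀ x, x ∉ R → (R.filter (fun y => E x y)).card ≤ θ x) →
      (∀ x ∈ L.toFinset, x ∉ R) ∧
      (∀ x ∈ L.toFinset, θ x ≤ ((R ∪ L.toFinset).filter (fun y => E x y)).card) ∧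
      (∀ x, x ∉ R → x ∉ L.toFinset → ((R ∪ L.toFinset).filter (fun y => E x y)).card ≤ θ x) := by
  intro L
  induction L with
  | nil =>
    intro R _ hR
    simp only [List.toFinset_nil, Finset.union_empty, Finset.notMem_empty]
    exact ⟨fun x h => absurd h (by simp), fun x h => absurd h (by simp), fun x hx _ => hR x hx⟩
  | cons x L ih =>
    intro R hpeel hR
    obtain ⟨⟨hxR, hcv, hz⟩, hpeel'⟩ := hpeel
    have hθx : θ x ≤ (R.filter (fun y => E x y)).card := Nat.sub_eq_zero_iff_le.mp hcv
    have hR' : ∀ z, z ∉ insert x R → ((insert x R).filter (fun y => E z y)).card ≤ θ z := by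
      intro z hzR
      rw [Finset.mem_insert, not_or] at hzR
      by_cases hEzx : E z x
      · have h1 : (R.filter (fun y => E z y)).card < θ z := by
          have := hz z hzR.2 hEzx
          simp only [curVal, Nat.sub_ne_zero_iff_lt] at this
          exact this
        calc ((insert x R).filter (fun y => E z y)).card
            = (insert x (R.filter (fun y => E z y))).card := by
              rw [Finset.filter_insert, if_pos hEzx]
          _ ≤ (R.filter (fun y => E z y)).card + 1 := Finset.card_insert_le _ _
          _ ≤ θ z := h1
      · rw [Finset.filter_insert, if_neg hEzx]
        exact hR z hzR.2
    obtain ⟨ha, hb, hc⟩ := ih (insert x R) hpeel' hR'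
    have hkey : insert x R ∪ L.toFinset = R ∪ (x :: L).toFinset := by
      rw [List.toFinset_cons, Finset.insert_union, Finset.union_insert]
    have hxL : x ∉ L.toFinset := fun h => (ha x h) (Finset.mem_insert_self x R)
    refine ⟨?_, ?_, ?_⟩
    · intro y hy
      rw [List.toFinset_cons, Finset.mem_insert] at hy
      rcases hy with rfl | hy
      · exact hxR
      · exact fun hyR => (ha y hy) (Finset.mem_insert_of_mem hyR)
    · intro y hy
      rw [List.toFinset_cons, Finset.mem_insert] at hy
      rcases hy with rfl | hy
      · refine hθx.trans (Finset.card_le_card (Finset.filter_subset_filter _ ?_))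
        exact Finset.subset_union_left
      · rw [← hkey]; exact hb y hy
    · intro y hyR hyL
      rw [List.toFinset_cons, Finset.mem_insert, not_or] at hyL
      rw [← hkey]
      exact hc y (by rw [Finset.mem_insert, not_or]; exact ⟨hyL.1, hyR⟩) hyL.2

/-- Completeness of peeling: any set satisfying the two counting conditions
relative to an already-peeled set `R` can be peeled off entirely. -/
lemma peel_exists {E : V → V → Prop} (θ : V → ℕ) (hac : Acyclic E) :
    ∀ (A R : Finset V), (∀ x ∈ A, x ∉ R) →
      (∀ x ∈ A, θ x ≤ ((R ∪ A).filter (fun y => E x y)).card) →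
      (∀ x, x ∉ R → x ∉ A → ((R ∪ A).filter (fun y => E x y)).card ≤ θ x) →
      ∃ L : List V, PeelFrom E θ R L ∧ L.toFinset = A := by
  intro A
  induction A using Finset.strongInduction with
  | _ A ih =>
    intro R hdisj h1 h2
    rcases A.eq_empty_or_nonempty with rfl | hA
    · exact ⟨[], trivial, rfl⟩
    have hZne : (A.filter (fun x => θ x ≤ (R.filter (fun y => E x y)).card)).Nonempty := by
      obtain ⟨x₀, hx₀, hsink⟩ := exists_sink hac A hA
      refine ⟨x₀, Finset.mem_filter.mpr ⟨hx₀, ?_⟩⟩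
      have h := h1 x₀ hx₀
      rwa [Finset.filter_union,
        Finset.filter_eq_empty_iff.mpr (fun y hy => hsink y hy),
        Finset.union_empty] at h
    obtain ⟨x, hxZ, hsrc⟩ := exists_source_s7 hac _ hZne
    have hxA : x ∈ A := (Finset.mem_filter.mp hxZ).1
    have hxθ : θ x ≤ (R.filter (fun y => E x y)).card := (Finset.mem_filter.mp hxZ).2
    have hxR : x ∉ R := hdisj x hxA
    have hera : ErasableAt E θ R x := by
      refine ⟨hxR, Nat.sub_eq_zero_of_le hxθ, ?_⟩
      intro z hzR hEzx
      simp only [curVal, Nat.sub_ne_zero_iff_lt]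
      by_cases hzA : z ∈ A
      · by_contra hle
        push_neg at hle
        exact hsrc z (Finset.mem_filter.mpr ⟨hzA, hle⟩) hEzx
      · have h := h2 z hzR hzA
        calc (R.filter (fun y => E z y)).card
            < (insert x (R.filter (fun y => E z y))).card := by
              rw [Finset.card_insert_of_notMem (fun hmem => hxR (Finset.mem_of_mem_filter _ hmem))]
              omega
          _ ≤ ((R ∪ A).filter (fun y => E z y)).card := by
              refine Finset.card_le_card ?_
              intro w hw
              rw [Finset.mem_insert] at hw
              rcases hw with rfl | hw
              · exact Finset.mem_filter.mpr ⟨Finset.mem_union_right _ hxA, hEzx⟩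
              · exact Finset.filter_subset_filter _ Finset.subset_union_left hw
          _ ≤ θ z := h
    have hsub : A.erase x ⊂ A := Finset.erase_ssubset hxA
    have hunion : insert x R ∪ A.erase x = R ∪ A := by
      rw [Finset.insert_union, ← Finset.union_insert, Finset.insert_erase hxA]
    obtain ⟨L, hL, hLA⟩ := ih (A.erase x) hsub (insert x R)
      (by
        intro y hy
        rw [Finset.mem_insert, not_or]
        exact ⟨Finset.ne_of_mem_erase hy, hdisj y (Finset.mem_of_mem_erase hy)⟩)
      (by
        intro y hy; rw [hunion]; exact h1 y (Finset.mem_of_mem_erase hy))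
      (by
        intro y hyR hyA
        rw [Finset.mem_insert, not_or] at hyR
        rw [hunion]
        exact h2 y hyR.2 (fun h => hyA (Finset.mem_erase.mpr ⟨hyR.1, h⟩)))
    exact ⟨x :: L, ⟨hera, hL⟩,
      by rw [List.toFinset_cons, hLA, Finset.insert_erase hxA]⟩

/-- Counting characterisation of initial sections. -/
lemma isInitialSection_iff {E : V → V → Prop} {θ : V → ℕ} (hac : Acyclic E)
    (A : Finset V) :
    IsInitialSection E θ A ↔
      (∀ x ∈ A, θ x ≤ (A.filter (fun y => E x y)).card) ∧
      (∀ x, x ∉ A → (A.filter (fun y => E x y)).card ≤ θ x) := by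
  constructor
  · rintro ⟨L, hL, rfl⟩
    obtain ⟨-, h1, h2⟩ := peel_sound E θ L ∅ hL (by simp)
    simp only [Finset.empty_union] at h1 h2
    exact ⟨h1, fun x hx => h2 x (Finset.notMem_empty x) hx⟩
  · rintro ⟨h1, h2⟩
    obtain ⟨L, hL, hLA⟩ := peel_exists θ hac A ∅ (by simp)
      (by simpa using h1) (by simpa using h2)
    exact ⟨L, hL, hLA⟩

/-- Any subset of all members of `S` satisfying the first counting condition can be
grown into a full initial section still contained in all members of `S`. -/
lemma grow_to_IS {E : V → V → Prop} {θ : V → ℕ} (hac : Acyclic E)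
    (S : Set (Finset V)) (hS : ∀ A ∈ S, IsInitialSection E θ A)
    (A₀ : Finset V) (hA₀ : A₀ ∈ S) :
    ∀ (n : ℕ) (B : Finset V), A₀.card - B.card ≤ n → (∀ A ∈ S, B ⊆ A) →
      (∀ x ∈ B, θ x ≤ (B.filter (fun y => E x y)).card) →
      ∃ D : Finset V, IsInitialSection E θ D ∧ B ⊆ D ∧ ∀ A ∈ S, D ⊆ A := by
  intro n
  induction n with
  | zero =>
    intro B hcard hsub hgood
    by_cases hii : ∀ x, x ∉ B → (B.filter (fun y => E x y)).card ≤ θ x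
    · exact ⟨B, (isInitialSection_iff hac B).mpr ⟨hgood, hii⟩, Finset.Subset.refl B,
        hsub⟩
    · push_neg at hii
      obtain ⟨x, hxB, hxlt⟩ := hii
      exfalso
      have hBA₀ : B ⊆ A₀ := hsub A₀ hA₀
      have hBeq : B = A₀ := Finset.eq_of_subset_of_card_le hBA₀ (by omega)
      have hxA₀ : x ∈ A₀ := by
        by_contra hxA₀
        have := ((isInitialSection_iff hac A₀).mp (hS A₀ hA₀)).2 x hxA₀
        rw [← hBeq] at this
        omega
      rw [← hBeq] at hxA₀
      exact hxB hxA₀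
  | succ n ihn =>
    intro B hcard hsub hgood
    by_cases hii : ∀ x, x ∉ B → (B.filter (fun y => E x y)).card ≤ θ x
    · exact ⟨B, (isInitialSection_iff hac B).mpr ⟨hgood, hii⟩, Finset.Subset.refl B,
        hsub⟩
    · push_neg at hii
      obtain ⟨x, hxB, hxlt⟩ := hii
      have hxall : ∀ A ∈ S, x ∈ A := by
        intro A hA
        by_contra hxA
        have h := ((isInitialSection_iff hac A).mp (hS A hA)).2 x hxA
        have hmono : (B.filter (fun y => E x y)).card ≤ (A.filter (fun y => E x y)).card :=
          Finset.card_le_card (Finset.filter_subset_filter _ (hsub A hA))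
        omega
      have hsub' : ∀ A ∈ S, insert x B ⊆ A := fun A hA =>
        Finset.insert_subset (hxall A hA) (hsub A hA)
      have hcard' : A₀.card - (insert x B).card ≤ n := by
        rw [Finset.card_insert_of_notMem hxB]
        have hxA₀ : x ∈ A₀ := hxall A₀ hA₀
        have : B.card < A₀.card :=
          Finset.card_lt_card (Finset.ssubset_iff_of_subset (hsub A₀ hA₀) |>.mpr
            ⟨x, hxA₀, hxB⟩)
        omega
      have hgood' : ∀ y ∈ insert x B, θ y ≤ ((insert x B).filter (fun z => E y z)).card := by
        intro y hy
        have hmono : (B.filter (fun z => E y z)).card ≤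
            ((insert x B).filter (fun z => E y z)).card :=
          Finset.card_le_card (Finset.filter_subset_filter _ (Finset.subset_insert x B))
        rcases Finset.mem_insert.mp hy with rfl | hy
        · omega
        · exact (hgood y hy).trans hmono
      obtain ⟨D, hD1, hD2, hD3⟩ := ihn (insert x B) hcard' hsub' hgood'
      exact ⟨D, hD1, (Finset.subset_insert x B).trans hD2, hD3⟩

/-- the poset of initial sections of a valued digraph, ordered by
inclusion, is a complete meet semi-lattice (every nonempty family has an
infimum); and when the vertex set is finite, it is a complete lattice with the
full vertex set as maximum. -/
theorem initialSections_completeMeetSemilattice (E : V → V → Prop) (θ : V → ℕ)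
    (hac : Acyclic E) (hocv : IsOCV E θ) :
    (∀ S : Set (Finset V), S.Nonempty → (∀ A ∈ S, IsInitialSection E θ A) →
      ∃ C : Finset V, IsInitialSection E θ C ∧ (∀ A ∈ S, C ⊆ A) ∧
        ∀ D : Finset V, IsInitialSection E θ D → (∀ A ∈ S, D ⊆ A) → D ⊆ C) ∧
    (∀ _ : Fintype V,
      IsInitialSection E θ Finset.univ ∧
      (∀ A : Finset V, IsInitialSection E θ A → A ⊆ Finset.univ) ∧
      ∀ S : Set (Finset V), (∀ A ∈ S, IsInitialSection E θ A) →
        ∃ C : Finset V, IsInitialSection E θ C ∧ (∀ A ∈ S, A ⊆ C) ∧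
          ∀ D : Finset V, IsInitialSection E θ D → (∀ A ∈ S, A ⊆ D) → C ⊆ D) := by
  have part1 : ∀ S : Set (Finset V), S.Nonempty → (∀ A ∈ S, IsInitialSection E θ A) →
      ∃ C : Finset V, IsInitialSection E θ C ∧ (∀ A ∈ S, C ⊆ A) ∧
        ∀ D : Finset V, IsInitialSection E θ D → (∀ A ∈ S, D ⊆ A) → D ⊆ C := by
    intro S hSne hSIS
    obtain ⟨A₀, hA₀⟩ := hSne
    set T : Finset (Finset V) :=
      A₀.powerset.filter (fun D => IsInitialSection E θ D ∧ ∀ A ∈ S, D ⊆ A) with hT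
    set C : Finset V := T.biUnion id with hC
    have hDC : ∀ D : Finset V, IsInitialSection E θ D → (∀ A ∈ S, D ⊆ A) → D ⊆ C := by
      intro D hD hDS
      have hDT : D ∈ T := by
        rw [hT, Finset.mem_filter, Finset.mem_powerset]
        exact ⟨hDS A₀ hA₀, hD, hDS⟩
      intro y hy
      exact Finset.mem_biUnion.mpr ⟨D, hDT, hy⟩
    have hCsub : ∀ A ∈ S, C ⊆ A := by
      intro A hA y hy
      obtain ⟨D, hDT, hyD⟩ := Finset.mem_biUnion.mp hy
      exact (Finset.mem_filter.mp hDT).2.2 A hA hyD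
    have hCgood : ∀ x ∈ C, θ x ≤ (C.filter (fun y => E x y)).card := by
      intro x hx
      obtain ⟨D, hDT, hxD⟩ := Finset.mem_biUnion.mp hx
      obtain ⟨-, hDIS, hDS⟩ := Finset.mem_filter.mp hDT
      have h1 := ((isInitialSection_iff hac D).mp hDIS).1 x hxD
      refine h1.trans (Finset.card_le_card (Finset.filter_subset_filter _ ?_))
      exact hDC D hDIS hDS
    obtain ⟨D, hDIS, hCD, hDS⟩ :=
      grow_to_IS hac S hSIS A₀ hA₀ A₀.card C (by omega) hCsub hCgood
    have hCeq : C = D := Finset.Subset.antisymm hCD (hDC D hDIS hDS)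
    exact ⟨C, hCeq ▸ hDIS, hCsub, hDC⟩
  refine ⟨part1, fun hfin => ?_⟩
  have huniv : IsInitialSection E θ (Finset.univ : Finset V) := by
    refine (isInitialSection_iff hac _).mpr ⟨?_, ?_⟩
    · intro x _
      obtain ⟨s, hs, hcard⟩ := hocv x
      refine hcard.trans (Finset.card_le_card ?_)
      intro y hy
      exact Finset.mem_filter.mpr ⟨Finset.mem_univ y, hs y hy⟩
    · intro x hx
      exact absurd (Finset.mem_univ x) hx
  refine ⟨huniv, fun A _ => Finset.subset_univ A, ?_⟩
  intro S hSIS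
  set U : Set (Finset V) := {B | IsInitialSection E θ B ∧ ∀ A ∈ S, A ⊆ B} with hU
  have hUne : U.Nonempty := ⟨Finset.univ, huniv, fun A _ => Finset.subset_univ A⟩
  obtain ⟨C, hCIS, hClb, hCgr⟩ := part1 U hUne (fun B hB => hB.1)
  refine ⟨C, hCIS, ?_, ?_⟩
  · intro A hA
    exact hCgr A (hSIS A hA) (fun B hB => hB.2 A hA)
  · intro D hDIS hDub
    exact hClb D ⟨hDIS, hDub⟩
end
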